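/- The constant 1/6 is best possible in the lower bound: if α > 1/6, then there exist a, b > 0 with a ≠ b such that M(a,b) < C(a,b)^α · A(a,b)^(1-α). -/

import Mathlib

noncomputable def NSmean (a b : ℝ) : ℝ := (a - b) / (2 * Real.arsinh ((a - b) / (a + b)))
noncomputable def Amean (a b : ℝ) : ℝ := (a + b) / 2
noncomputable def Cmean (a b : ℝ) : ℝ := (a ^ 2 + b ^ 2) / (a + b)

lemma aux_arsinh {t : ℝ} (ht0 : 0 ≤ t) (ht1 : t ≤ 1) : t - t ^ 3 / 6 ≤ Real.arsinh t := by
  have key : MonotoneOn (fun s : ℝ => Real.arsinh s - (s - s ^ 3 / 6)) (Set.Icc 0 1) := by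
    apply monotoneOn_of_deriv_nonneg (convex_Icc 0 1)
    · exact (Real.continuous_arsinh.sub (by continuity)).continuousOn
    · intro x hx
      exact ((Real.differentiable_arsinh x).sub
        (((differentiable_id.sub ((differentiable_pow 3).div_const 6)) x))).differentiableWithinAt
    · intro x hx
      rw [interior_Icc] at hx
      have hd : HasDerivAt (fun s : ℝ => Real.arsinh s - (s - s ^ 3 / 6))
          ((Real.sqrt (1 + x ^ 2))⁻¹ - (1 - (3 : ℕ) * x ^ 2 / 6)) x := by
        exact (Real.hasDerivAt_arsinh x).sub
          ((hasDerivAt_id x).sub ((hasDerivAt_pow 3 x).div_const 6))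
      rw [hd.deriv]
      have hs : (0 : ℝ) < Real.sqrt (1 + x ^ 2) := Real.sqrt_pos.2 (by nlinarith [hx.1])
      have hsq : Real.sqrt (1 + x ^ 2) ^ 2 = 1 + x ^ 2 :=
        Real.sq_sqrt (by nlinarith [hx.1])
      have hle : (1 - 3 * x ^ 2 / 6) * Real.sqrt (1 + x ^ 2) ≤ 1 := by
        have h2 : ((1 - 3 * x ^ 2 / 6) * Real.sqrt (1 + x ^ 2)) ^ 2 ≤ 1 := by
          rw [mul_pow, hsq]
          have key : x ^ 2 * x ^ 2 * (x ^ 2 - 1) ≤ 0 :=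
            mul_nonpos_of_nonneg_of_nonpos (by positivity) (by nlinarith [hx.1, hx.2])
          nlinarith [key, sq_nonneg x]
        nlinarith [sq_nonneg ((1 - 3 * x ^ 2 / 6) * Real.sqrt (1 + x ^ 2) - 1)]
      have : (1 - 3 * x ^ 2 / 6 : ℝ) ≤ (Real.sqrt (1 + x ^ 2))⁻¹ := by
        rw [inv_eq_one_div, le_div_iff₀ hs]
        exact hle
      push_cast
      linarith
  have h := key (Set.mem_Icc.2 ⟨le_refl 0, zero_le_one⟩) (Set.mem_Icc.2 ⟨ht0, ht1⟩) ht0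
  simpa using h

theorem stmt_2 (α : ℝ) (hα : 1 / 6 < α) :
    ∃ a b : ℝ, 0 < a ∧ 0 < b ∧ a ≠ b ∧
      NSmean a b < Cmean a b ^ α * Amean a b ^ (1 - α) := by
  set β : ℝ := min α (1/3) with hβdef
  have hβ1 : 1 / 6 < β := lt_min hα (by norm_num)
  have hβ2 : β ≤ 1/3 := min_le_right _ _
  have hβα : β ≤ α := min_le_left _ _
  set x : ℝ := (6 * β - 1) / 2 with hxdef
  have hx0 : 0 < x := by simp only [hxdef]; linarith
  have hx1 : x ≤ 1/2 := by simp only [hxdef]; linarith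
  set t : ℝ := Real.sqrt x with htdef
  have ht0 : 0 < t := Real.sqrt_pos.2 hx0
  have htsq : t ^ 2 = x := Real.sq_sqrt hx0.le
  have ht1 : t < 1 := by
    nlinarith [htsq, ht0]
  refine ⟨1 + t, 1 - t, by linarith, by linarith, by intro h; linarith, ?_⟩
  have hab1 : (1 + t) - (1 - t) = 2 * t := by ring
  have hab2 : (1 + t) + (1 - t) = 2 := by ring
  have hNS : NSmean (1 + t) (1 - t) = t / Real.arsinh t := by
    rw [NSmean, hab1, hab2]
    rw [show (2 * t) / 2 = t by ring]
    have har : Real.arsinh t ≠ 0 := (Real.arsinh_pos_iff.2 ht0).ne'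
    field_simp
  have hA : Amean (1 + t) (1 - t) = 1 := by rw [Amean, hab2]; norm_num
  have hC : Cmean (1 + t) (1 - t) = 1 + x := by
    rw [Cmean]
    rw [show (1 + t) ^ 2 + (1 - t) ^ 2 = 2 * (1 + t ^ 2) by ring, htsq, hab2]
    ring
  rw [hNS, hA, hC, Real.one_rpow, mul_one]
  -- Step 1: t / arsinh t ≤ 6 / (6 - x)
  have harpos : 0 < Real.arsinh t := Real.arsinh_pos_iff.2 ht0
  have hden : 0 < t - t ^ 3 / 6 := by nlinarith [ht0, ht1]
  have hlow : t - t ^ 3 / 6 ≤ Real.arsinh t := aux_arsinh ht0.le ht1.le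
  have step1 : t / Real.arsinh t ≤ 6 / (6 - x) := by
    have h1 : t / Real.arsinh t ≤ t / (t - t ^ 3 / 6) :=
      div_le_div_of_nonneg_left ht0.le hden hlow
    have h2 : t / (t - t ^ 3 / 6) = 6 / (6 - x) := by
      rw [← htsq]
      have h6 : (0 : ℝ) < 6 - t ^ 2 := by nlinarith [ht1, ht0]
      rw [div_eq_div_iff hden.ne' h6.ne']
      ring
    linarith [h1, h2.symm.le]
  -- Step 2: 6 / (6 - x) < (1 + x) / (1 + (1 - β) * x)
  have hd2 : 0 < 1 + (1 - β) * x := by nlinarith [hx0, hβ2]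
  have hd3 : 0 < 6 - x := by linarith
  have step2 : 6 / (6 - x) < (1 + x) / (1 + (1 - β) * x) := by
    rw [div_lt_div_iff₀ hd3 hd2]
    have hxlt : x < 6 * β - 1 := by simp only [hxdef]; linarith
    nlinarith [hx0, hxlt]
  -- Step 3: (1 + x) / (1 + (1 - β) * x) ≤ (1 + x) ^ β
  have hpos1x : (0 : ℝ) < 1 + x := by linarith
  have hbern : (1 + x) ^ (1 - β) ≤ 1 + (1 - β) * x :=
    rpow_one_add_le_one_add_mul_self (by linarith) (by linarith) (by linarith)
  have hrp : (0 : ℝ) < (1 + x) ^ (1 - β) := Real.rpow_pos_of_pos hpos1x _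
  have hprod : (1 + x) ^ β * (1 + x) ^ (1 - β) = 1 + x := by
    rw [← Real.rpow_add hpos1x]; simp
  have step3 : (1 + x) / (1 + (1 - β) * x) ≤ (1 + x) ^ β := by
    rw [div_le_iff₀ hd2]
    calc (1 + x) = (1 + x) ^ β * (1 + x) ^ (1 - β) := hprod.symm
      _ ≤ (1 + x) ^ β * (1 + (1 - β) * x) := by
          apply mul_le_mul_of_nonneg_left hbern (Real.rpow_pos_of_pos hpos1x _).le
  -- Step 4: (1 + x) ^ β ≤ (1 + x) ^ α
  have step4 : (1 + x) ^ β ≤ (1 + x) ^ α :=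
    Real.rpow_le_rpow_left_iff (by linarith : (1:ℝ) < 1 + x) |>.2 hβα
  linarith
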